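/- In Matching Pennies — the two-player game with A = B = {Heads, Tails}, u1(Heads,Heads) = u1(Tails,Tails) = 1, u1(Heads,Tails) = u1(Tails,Heads) = −1, and u2 = −u1 — the leader's value of every pure commitment (a1, P), with P : A × B → ℝ≥0 an arbitrary payment function, is at most −1, while the profile in which both players mix uniformly is a Nash equilibrium giving both players expected utility 0. Hence the leader's optimal value over pure commitments with payments is strictly below her utility in the worst Nash equilibrium of the base game. -/

import Mathlib

open Finset

noncomputable section

/-- A probability distribution on a finite type, given as a weight function. -/
def IsDist {X : Type*} [Fintype X] (σ : X → ℝ) : Prop :=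
  (∀ x, 0 ≤ σ x) ∧ ∑ x, σ x = 1

/-- The point mass at `x0`. -/
def delta {X : Type*} [DecidableEq X] (x0 : X) : X → ℝ :=
  fun x => if x = x0 then 1 else 0

/-- Follower's induced utility under commitment `(σ, P)` when playing `b`. -/
def folU {A B : Type*} [Fintype A] (u2 : A → B → ℝ) (σ : A → ℝ) (P : A → B → ℝ) (b : B) : ℝ :=
  ∑ a, σ a * (u2 a b + P a b)

/-- Leader's utility under commitment `(σ, P)` when the follower plays `b`. -/
def leadU {A B : Type*} [Fintype A] (u1 : A → B → ℝ) (σ : A → ℝ) (P : A → B → ℝ) (b : B) : ℝ :=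
  ∑ a, σ a * (u1 a b - P a b)

/-- The leader's value of the commitment `(σ, P)`: the follower plays an action maximizing
his induced utility, tiebreaking in favor of the leader. -/
def leaderValue {A B : Type*} [Fintype A] [Fintype B] (u1 u2 : A → B → ℝ)
    (σ : A → ℝ) (P : A → B → ℝ) : ℝ :=
  sSup {x | ∃ b : B, (∀ b' : B, folU u2 σ P b' ≤ folU u2 σ P b) ∧ x = leadU u1 σ P b}

/-- Nash equilibrium of a finite two-player game. -/
def NashEq {A B : Type*} [Fintype A] [Fintype B] (u1 u2 : A → B → ℝ)
    (σ1 : A → ℝ) (σ2 : B → ℝ) : Prop :=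
  IsDist σ1 ∧ IsDist σ2 ∧
  (∀ a : A, 0 < σ1 a → ∀ a' : A, ∑ b, σ2 b * u1 a' b ≤ ∑ b, σ2 b * u1 a b) ∧
  (∀ b : B, 0 < σ2 b → ∀ b' : B, ∑ a, σ1 a * u2 a b' ≤ ∑ a, σ1 a * u2 a b)

/-- The actions in Matching Pennies. -/
inductive Coin | Heads | Tails
  deriving DecidableEq

instance : Fintype Coin :=
  ⟨{Coin.Heads, Coin.Tails}, fun x => by cases x <;> simp⟩

/-- Leader's utility in Matching Pennies. -/
def mp1 : Coin → Coin → ℝ := fun a b => if a = b then 1 else -1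

/-- Follower's utility in Matching Pennies. -/
def mp2 : Coin → Coin → ℝ := fun a b => -(mp1 a b)

theorem sumCoin (f : Coin → ℝ) : ∑ x, f x = f Coin.Heads + f Coin.Tails := by
  have : (Finset.univ : Finset Coin) = {Coin.Heads, Coin.Tails} := rfl
  rw [this, Finset.sum_insert (by simp), Finset.sum_singleton]

theorem sum_delta (a1 : Coin) (g : Coin → ℝ) : ∑ a, delta a1 a * g a = g a1 := by
  cases a1 <;> simp [sumCoin, delta]

theorem pure_le (a1 : Coin) (P : Coin → Coin → ℝ) (hP : ∀ a b, 0 ≤ P a b) :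
    leaderValue mp1 mp2 (delta a1) P ≤ -1 := by
  have hfol : ∀ b, folU mp2 (delta a1) P b = mp2 a1 b + P a1 b := fun b => sum_delta a1 _
  have hlead : ∀ b, leadU mp1 (delta a1) P b = mp1 a1 b - P a1 b := fun b => sum_delta a1 _
  apply csSup_le
  · obtain ⟨b, _, hb⟩ := Finset.exists_max_image Finset.univ (folU mp2 (delta a1) P)
      ⟨Coin.Heads, Finset.mem_univ _⟩
    exact ⟨leadU mp1 (delta a1) P b, b, fun b' => hb b' (Finset.mem_univ _), rfl⟩
  · rintro x ⟨b, hmax, rfl⟩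
    rw [hlead]
    have h1 := hmax Coin.Heads
    have h2 := hmax Coin.Tails
    rw [hfol, hfol] at h1 h2
    cases a1 <;> cases b <;>
      simp [mp1, mp2] at h1 h2 ⊢ <;>
      linarith [hP Coin.Heads Coin.Tails, hP Coin.Tails Coin.Heads]

theorem ne_val (σ1 σ2 : Coin → ℝ) (h : NashEq mp1 mp2 σ1 σ2) :
    ∑ a, ∑ b, σ1 a * σ2 b * mp1 a b = 0 := by
  obtain ⟨⟨h1n, h1s⟩, ⟨h2n, h2s⟩, hb1, hb2⟩ := h
  rw [sumCoin] at h1s h2s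
  have hqq : σ2 Coin.Heads = σ2 Coin.Tails := by
    by_contra hne
    rcases lt_or_gt_of_ne hne with hlt | hgt
    · -- σ2 Tails > 1/2 > 0
      have hq : 0 < σ2 Coin.Tails := by linarith [h2n Coin.Heads]
      have e2 := hb2 Coin.Tails hq Coin.Heads
      rw [sumCoin, sumCoin] at e2
      simp [mp1, mp2] at e2
      -- e2 : σ1 T ≤ σ1 H (p' ≤ p)
      have hp : 0 < σ1 Coin.Heads := by linarith [h1n Coin.Tails]
      have e1 := hb1 Coin.Heads hp Coin.Tails
      rw [sumCoin, sumCoin] at e1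
      simp [mp1, mp2] at e1
      linarith
    · have hq : 0 < σ2 Coin.Heads := by linarith [h2n Coin.Tails]
      have e2 := hb2 Coin.Heads hq Coin.Tails
      rw [sumCoin, sumCoin] at e2
      simp [mp1, mp2] at e2
      have hp : 0 < σ1 Coin.Tails := by linarith [h1n Coin.Heads]
      have e1 := hb1 Coin.Tails hp Coin.Heads
      rw [sumCoin, sumCoin] at e1
      simp [mp1, mp2] at e1
      linarith
  rw [sumCoin]
  rw [sumCoin, sumCoin]
  simp [mp1]
  rw [hqq]
  ring

theorem stmt6 :
    (∀ (a1 : Coin) (P : Coin → Coin → ℝ), (∀ a b, 0 ≤ P a b) →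
        leaderValue mp1 mp2 (delta a1) P ≤ -1)
    ∧ NashEq mp1 mp2 (fun _ => 1/2) (fun _ => 1/2)
    ∧ (∑ a, ∑ b, (1/2 : ℝ) * (1/2 : ℝ) * mp1 a b) = 0
    ∧ (∑ a, ∑ b, (1/2 : ℝ) * (1/2 : ℝ) * mp2 a b) = 0
    ∧ sSup {x | ∃ (a1 : Coin) (P : Coin → Coin → ℝ), (∀ a b, 0 ≤ P a b) ∧
          x = leaderValue mp1 mp2 (delta a1) P}
        < sInf {x | ∃ (σ1 σ2 : Coin → ℝ), NashEq mp1 mp2 σ1 σ2 ∧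
            x = ∑ a, ∑ b, σ1 a * σ2 b * mp1 a b} := by
  have hNE : NashEq mp1 mp2 (fun _ => (1:ℝ)/2) (fun _ => (1:ℝ)/2) := by
    refine ⟨⟨fun _ => by norm_num, by rw [sumCoin]; norm_num⟩,
      ⟨fun _ => by norm_num, by rw [sumCoin]; norm_num⟩, ?_, ?_⟩
    · intro a _ a'
      rw [sumCoin, sumCoin]
      cases a <;> cases a' <;> simp [mp1]
    · intro b _ b'
      rw [sumCoin, sumCoin]
      cases b <;> cases b' <;> simp [mp1, mp2]
  refine ⟨pure_le, hNE, ?_, ?_, ?_⟩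
  · rw [sumCoin, sumCoin, sumCoin]; simp [mp1]; try ring
  · rw [sumCoin, sumCoin, sumCoin]; simp [mp1, mp2]; try ring
  · have hS : sSup {x | ∃ (a1 : Coin) (P : Coin → Coin → ℝ), (∀ a b, 0 ≤ P a b) ∧
          x = leaderValue mp1 mp2 (delta a1) P} ≤ -1 := by
      apply csSup_le
      · exact ⟨leaderValue mp1 mp2 (delta Coin.Heads) (fun _ _ => 0), Coin.Heads,
          fun _ _ => 0, fun _ _ => le_refl 0, rfl⟩
      · rintro x ⟨a1, P, hP, rfl⟩
        exact pure_le a1 P hP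
    have hI : (0:ℝ) ≤ sInf {x | ∃ (σ1 σ2 : Coin → ℝ), NashEq mp1 mp2 σ1 σ2 ∧
            x = ∑ a, ∑ b, σ1 a * σ2 b * mp1 a b} := by
      apply le_csInf
      · exact ⟨_, fun _ => 1/2, fun _ => 1/2, hNE, rfl⟩
      · rintro x ⟨σ1, σ2, hN, rfl⟩
        exact (ne_val σ1 σ2 hN).ge
    linarith
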